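/- For every integer d ≥ 1, setting c(d) = (−1)^d·b(d+1), there exists a polynomial q with real coefficients such that for every integer n ≥ 0, ∑_{k=0}^{n−1} (k^d − c(d))·(−1)^k·k! = q(n)·(−1)^n·n! − q(0). -/

import Mathlib

/-- The Bell numbers: `bell 0 = 1` and `bell (d+1) = ∑_{j=0}^{d} C(d,j) * bell j`. -/
def bell : ℕ → ℕ
  | 0 => 1
  | d + 1 => ∑ j ∈ (Finset.range (d + 1)).attach, Nat.choose d j.1 * bell j.1
  decreasing_by exact Finset.mem_range.mp j.2

open Finset Polynomial

/-- `c j = (-1)^j * bell (j+1)`. -/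
noncomputable def cc (j : ℕ) : ℝ := (-1 : ℝ) ^ j * (bell (j + 1) : ℝ)

lemma bell_succ_real (d : ℕ) : (bell (d + 1) : ℝ) =
    ∑ j ∈ Finset.range (d + 1), (Nat.choose d j : ℝ) * (bell j : ℝ) := by
  have : bell (d + 1) = ∑ j ∈ Finset.range (d + 1), Nat.choose d j * bell j := by
    rw [bell]
    exact Finset.sum_attach (Finset.range (d + 1)) (fun j => Nat.choose d j * bell j)
  rw [this]
  push_cast
  ring

lemma alt_real (m : ℕ) :
    ∑ t ∈ Finset.range (m + 1), (-1 : ℝ) ^ t * (Nat.choose m t : ℝ) =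
      if m = 0 then 1 else 0 := by
  have h := Int.alternating_sum_range_choose (n := m)
  have : ((∑ t ∈ Finset.range (m + 1), ((-1) ^ t * Nat.choose m t : ℤ) : ℤ) : ℝ) =
      ∑ t ∈ Finset.range (m + 1), (-1 : ℝ) ^ t * (Nat.choose m t : ℝ) := by
    push_cast; ring
  rw [← this, h]
  split <;> norm_num

lemma innerAltSum (d i : ℕ) (hi : i ≤ d) :
    ∑ j ∈ Finset.range (d + 1), (-1 : ℝ) ^ j * (Nat.choose d j : ℝ) * (Nat.choose j i : ℝ) =
      if i = d then (-1 : ℝ) ^ d else 0 := by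
  have hsplit : Finset.range (d + 1) = Finset.Ico 0 i ∪ Finset.Ico i (d + 1) := by
    rw [Finset.range_eq_Ico, Finset.Ico_union_Ico_eq_Ico (Nat.zero_le _) (by omega)]
  rw [hsplit, Finset.sum_union (by
    simp [Finset.disjoint_left]
    intro a ha hb; omega)]
  have h0 : ∑ j ∈ Finset.Ico 0 i, (-1 : ℝ) ^ j * (Nat.choose d j : ℝ) * (Nat.choose j i : ℝ)
      = 0 := by
    apply Finset.sum_eq_zero
    intro j hj
    simp only [Finset.mem_Ico] at hj
    rw [Nat.choose_eq_zero_of_lt hj.2]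
    simp
  rw [h0, zero_add]
  rw [Finset.sum_Ico_eq_sum_range]
  have hlen : d + 1 - i = (d - i) + 1 := by omega
  rw [hlen]
  have hterm : ∀ t ∈ Finset.range ((d - i) + 1),
      (-1 : ℝ) ^ (i + t) * (Nat.choose d (i + t) : ℝ) * (Nat.choose (i + t) i : ℝ)
      = ((-1 : ℝ) ^ i * (Nat.choose d i : ℝ)) *
          ((-1 : ℝ) ^ t * (Nat.choose (d - i) t : ℝ)) := by
    intro t ht
    simp only [Finset.mem_range] at ht
    have h1 : Nat.choose d (i + t) * Nat.choose (i + t) i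
        = Nat.choose d i * Nat.choose (d - i) t := by
      have := Nat.choose_mul (n := d) (k := i + t) (s := i) (Nat.le_add_right _ _)
      simpa [Nat.add_sub_cancel_left] using this
    have h1r : (Nat.choose d (i + t) : ℝ) * (Nat.choose (i + t) i : ℝ)
        = (Nat.choose d i : ℝ) * (Nat.choose (d - i) t : ℝ) := by
      exact_mod_cast congrArg (Nat.cast : ℕ → ℝ) h1
    rw [pow_add]
    linear_combination ((-1 : ℝ) ^ i * (-1 : ℝ) ^ t) * h1r
  rw [Finset.sum_congr rfl hterm, ← Finset.mul_sum, alt_real]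
  by_cases h : i = d
  · subst h
    simp
  · have : d - i ≠ 0 := by omega
    simp [this, h]

/-- Key Bell identity: `∑_{j=0}^{d} C(d,j) (-1)^j bell (j+1) = (-1)^d bell d`. -/
lemma bell_alt (d : ℕ) :
    ∑ j ∈ Finset.range (d + 1), (-1 : ℝ) ^ j * (Nat.choose d j : ℝ) * (bell (j + 1) : ℝ)
      = (-1 : ℝ) ^ d * (bell d : ℝ) := by
  have step1 : ∀ j ∈ Finset.range (d + 1),
      (-1 : ℝ) ^ j * (Nat.choose d j : ℝ) * (bell (j + 1) : ℝ)
      = ∑ i ∈ Finset.range (d + 1),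
          (-1 : ℝ) ^ j * (Nat.choose d j : ℝ) * ((Nat.choose j i : ℝ) * (bell i : ℝ)) := by
    intro j hj
    simp only [Finset.mem_range] at hj
    rw [bell_succ_real j, Finset.mul_sum]
    refine Finset.sum_subset ?_ ?_
    · intro x hx
      simp only [Finset.mem_range] at hx ⊢
      omega
    · intro x hx hnx
      simp only [Finset.mem_range] at hx hnx
      rw [Nat.choose_eq_zero_of_lt (show j < x by omega)]
      simp
  rw [Finset.sum_congr rfl step1, Finset.sum_comm]
  have step2 : ∀ i ∈ Finset.range (d + 1),
      ∑ j ∈ Finset.range (d + 1),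
          (-1 : ℝ) ^ j * (Nat.choose d j : ℝ) * ((Nat.choose j i : ℝ) * (bell i : ℝ))
      = (if i = d then (-1 : ℝ) ^ d else 0) * (bell i : ℝ) := by
    intro i hi
    simp only [Finset.mem_range] at hi
    rw [← innerAltSum d i (by omega), Finset.sum_mul]
    apply Finset.sum_congr rfl
    intro j hj
    ring
  rw [Finset.sum_congr rfl step2]
  rw [Finset.sum_eq_single d]
  · simp
  · intro b hb hbd; simp [hbd]
  · intro h; simp at h

/-- The recurrence satisfied by `cc`. -/
lemma cc_rec (d : ℕ) (hd : 1 ≤ d) :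
    cc d = -cc (d - 1) - ∑ j ∈ Finset.range d, (Nat.choose d j : ℝ) * cc j := by
  obtain ⟨e, rfl⟩ : ∃ e, d = e + 1 := ⟨d - 1, by omega⟩
  have h := bell_alt (e + 1)
  rw [Finset.sum_range_succ] at h
  simp only [Nat.choose_self, Nat.cast_one] at h
  have h' : (-1 : ℝ) ^ (e + 1) * (bell (e + 2) : ℝ)
      = (-1 : ℝ) ^ (e + 1) * (bell (e + 1) : ℝ)
        - ∑ j ∈ Finset.range (e + 1), (-1 : ℝ) ^ j * (Nat.choose (e + 1) j : ℝ)
            * (bell (j + 1) : ℝ) := by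
    linarith [h]
  simp only [cc, Nat.add_sub_cancel]
  rw [h']
  have : ∑ j ∈ Finset.range (e + 1), (Nat.choose (e + 1) j : ℝ)
      * ((-1 : ℝ) ^ j * (bell (j + 1) : ℝ))
      = ∑ j ∈ Finset.range (e + 1), (-1 : ℝ) ^ j * (Nat.choose (e + 1) j : ℝ)
          * (bell (j + 1) : ℝ) := by
    apply Finset.sum_congr rfl; intro j hj; ring
  rw [this]
  have hsign : (-1 : ℝ) ^ (e + 1) * (bell (e + 1) : ℝ)
      = -((-1 : ℝ) ^ e * (bell (e + 1) : ℝ)) := by ring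
  linarith [hsign]

/-- Existence of a telescoping polynomial for each `d`. -/
lemma key (d : ℕ) : ∃ q : Polynomial ℝ, ∀ x : ℝ,
    (x : ℝ) ^ d - cc d = -((x + 1) * q.eval (x + 1)) - q.eval x := by
  induction d using Nat.strong_induction_on with
  | _ d ih =>
    match d, ih with
    | 0, _ =>
      refine ⟨0, fun x => ?_⟩
      have h1 : bell 1 = ∑ j ∈ Finset.range 1, Nat.choose 0 j * bell j := by
        rw [bell]
        exact Finset.sum_attach (Finset.range 1) (fun j => Nat.choose 0 j * bell j)
      have h0 : bell 0 = 1 := by rw [bell]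
      simp [cc, h1, h0]
    | (e + 1), ih =>
      choose qf hqf using fun (j : ℕ) (hj : j < e + 1) => ih j hj
      classical
      set qg : ℕ → Polynomial ℝ := fun j => if h : j < e + 1 then qf j h else 0 with hqg
      have hqg' : ∀ j, j < e + 1 → ∀ x : ℝ,
          (x + 1) * Polynomial.eval (x + 1) (qg j) + Polynomial.eval x (qg j)
            = cc j - x ^ j := by
        intro j hj x
        have := hqf j hj x
        simp only [hqg, dif_pos hj]
        linarith [this]
      refine ⟨-(Polynomial.X ^ e)
          - ∑ j ∈ Finset.range (e + 1), Polynomial.C ((Nat.choose (e + 1) j : ℝ)) * qg j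
          - qg e, fun x => ?_⟩
      have heval : ∀ y : ℝ,
          Polynomial.eval y (-(Polynomial.X ^ e)
            - ∑ j ∈ Finset.range (e + 1), Polynomial.C ((Nat.choose (e + 1) j : ℝ)) * qg j
            - qg e)
          = -(y ^ e)
            - ∑ j ∈ Finset.range (e + 1), (Nat.choose (e + 1) j : ℝ) * Polynomial.eval y (qg j)
            - Polynomial.eval y (qg e) := by
        intro y
        simp [Polynomial.eval_finset_sum]
      rw [heval, heval]
      set S1 := ∑ j ∈ Finset.range (e + 1),
          (Nat.choose (e + 1) j : ℝ) * Polynomial.eval (x + 1) (qg j) with hS1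
      set S2 := ∑ j ∈ Finset.range (e + 1),
          (Nat.choose (e + 1) j : ℝ) * Polynomial.eval x (qg j) with hS2
      set Ccc := ∑ j ∈ Finset.range (e + 1), (Nat.choose (e + 1) j : ℝ) * cc j with hCcc
      set Cx := ∑ j ∈ Finset.range (e + 1), (Nat.choose (e + 1) j : ℝ) * x ^ j with hCx
      have key1 : (x + 1) * S1 + S2 = Ccc - Cx := by
        rw [hS1, hS2, hCcc, hCx, Finset.mul_sum, ← Finset.sum_add_distrib,
          ← Finset.sum_sub_distrib]
        apply Finset.sum_congr rfl
        intro j hj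
        simp only [Finset.mem_range] at hj
        have := hqg' j hj x
        nlinarith [this]
      have keyE : (x + 1) * Polynomial.eval (x + 1) (qg e) + Polynomial.eval x (qg e)
          = cc e - x ^ e := hqg' e (by omega) x
      have hbin' : (x + 1) ^ (e + 1) = x ^ (e + 1) + Cx := by
        rw [hCx, add_pow]
        rw [Finset.sum_range_succ]
        simp only [Nat.choose_self, Nat.cast_one]
        have : ∀ j ∈ Finset.range (e + 1),
            x ^ j * (1 : ℝ) ^ (e + 1 - j) * ((e + 1).choose j : ℝ)
              = ((e + 1).choose j : ℝ) * x ^ j := by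
          intro j hj; ring
        rw [Finset.sum_congr rfl this]
        ring
      have hrec := cc_rec (e + 1) (by omega)
      simp only [Nat.add_sub_cancel] at hrec
      rw [← hCcc] at hrec
      linear_combination -hbin' - key1 - keyE - hrec
theorem stmt_18 (d : ℕ) (hd : 1 ≤ d) :
    ∃ q : Polynomial ℝ, ∀ n : ℕ,
      ∑ k ∈ Finset.range n,
          (((k : ℝ) ^ d - (-1 : ℝ) ^ d * (bell (d + 1) : ℝ)) *
            (-1 : ℝ) ^ k * (Nat.factorial k : ℝ)) =
        q.eval (n : ℝ) * (-1 : ℝ) ^ n * (Nat.factorial n : ℝ) - q.eval 0 := by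
  obtain ⟨q, hq⟩ := key d
  refine ⟨q, fun n => ?_⟩
  induction n with
  | zero => simp
  | succ n ih =>
    rw [Finset.sum_range_succ, ih]
    have h := hq (n : ℝ)
    have hcc : cc d = (-1 : ℝ) ^ d * (bell (d + 1) : ℝ) := rfl
    rw [hcc] at h
    have hfac : (Nat.factorial (n + 1) : ℝ) = (n + 1) * (Nat.factorial n : ℝ) := by
      rw [Nat.factorial_succ]; push_cast; ring
    push_cast [hfac, pow_succ]
    linear_combination ((-1 : ℝ) ^ n * (Nat.factorial n : ℝ)) * h
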